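/- Let l_{12}, l_{13}, l_{14}, l_{23}, l_{24}, l_{34} be positive reals (indexed by the two-element subsets of {1,2,3,4}), and set c_{ij} = cosh(l_{ij}), s_{ij} = sinh(l_{ij}). For distinct i,j,k in {1,2,3,4}, the quantity (c_{ij} c_{ik} + c_{jk})/(s_{ij} s_{ik}) is strictly greater than 1, so one may define x^i_{jk} = arcosh((c_{ij} c_{ik} + c_{jk})/(s_{ij} s_{ik})), i.e. the unique nonnegative real whose cosh equals this quantity. Then for every permutation {i,j,k,h} of {1,2,3,4}: (cosh(x^i_{jk}) cosh(x^i_{jh}) − cosh(x^i_{kh}))/(sinh(x^i_{jk}) sinh(x^i_{jh})) = (c_{ik} c_{ih} + c_{jk} c_{jh} + c_{ij} c_{ik} c_{jh} + c_{ij} c_{ih} c_{jk} − s_{ij}^2 c_{kh}) / (√(2 c_{ij} c_{ik} c_{jk} + c_{ij}^2 + c_{ik}^2 + c_{jk}^2 − 1) · √(2 c_{ij} c_{ih} c_{jh} + c_{ij}^2 + c_{ih}^2 + c_{jh}^2 − 1)). In particular, the left-hand side is unchanged when i and j are exchanged. -/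

import Mathlib

open Real

noncomputable def coshVertexEdge (l : Fin 4 → Fin 4 → ℝ) (i j k : Fin 4) : ℝ :=
  (Real.cosh (l i j) * Real.cosh (l i k) + Real.cosh (l j k)) /
    (Real.sinh (l i j) * Real.sinh (l i k))

private lemma aux_frac (a b c d e f sa sb sd q1 q2 : ℝ) (hsa : sa ≠ 0) (hsb : sb ≠ 0)
    (hsd : sd ≠ 0) (hq1 : q1 ≠ 0) (hq2 : q2 ≠ 0) :
    ((a * b + c) / (sa * sb) * ((a * d + e) / (sa * sd)) - (b * d + f) / (sb * sd)) /
      (q1 / (sa * sb) * (q2 / (sa * sd))) =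
    ((a * b + c) * (a * d + e) - sa ^ 2 * (b * d + f)) / (q1 * q2) := by
  field_simp

theorem vertex_edge_dihedral_formula
    (l : Fin 4 → Fin 4 → ℝ)
    (hsym : ∀ i j, l i j = l j i)
    (hpos : ∀ i j, i ≠ j → 0 < l i j)
    (X : Fin 4 → Fin 4 → Fin 4 → ℝ)
    (hX : ∀ i j k, i ≠ j → i ≠ k → j ≠ k →
      0 ≤ X i j k ∧ Real.cosh (X i j k) = coshVertexEdge l i j k) :
    (∀ i j k, i ≠ j → i ≠ k → j ≠ k → 1 < coshVertexEdge l i j k) ∧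
    (∀ i j k h : Fin 4, i ≠ j → i ≠ k → i ≠ h → j ≠ k → j ≠ h → k ≠ h →
      (Real.cosh (X i j k) * Real.cosh (X i j h) - Real.cosh (X i k h)) /
        (Real.sinh (X i j k) * Real.sinh (X i j h)) =
      (Real.cosh (l i k) * Real.cosh (l i h) + Real.cosh (l j k) * Real.cosh (l j h)
        + Real.cosh (l i j) * Real.cosh (l i k) * Real.cosh (l j h)
        + Real.cosh (l i j) * Real.cosh (l i h) * Real.cosh (l j k)
        - (Real.sinh (l i j)) ^ 2 * Real.cosh (l k h)) /
      (Real.sqrt (2 * Real.cosh (l i j) * Real.cosh (l i k) * Real.cosh (l j k)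
            + (Real.cosh (l i j)) ^ 2 + (Real.cosh (l i k)) ^ 2 + (Real.cosh (l j k)) ^ 2 - 1) *
        Real.sqrt (2 * Real.cosh (l i j) * Real.cosh (l i h) * Real.cosh (l j h)
            + (Real.cosh (l i j)) ^ 2 + (Real.cosh (l i h)) ^ 2 + (Real.cosh (l j h)) ^ 2 - 1))) ∧
    (∀ i j k h : Fin 4, i ≠ j → i ≠ k → i ≠ h → j ≠ k → j ≠ h → k ≠ h →
      (Real.cosh (X i j k) * Real.cosh (X i j h) - Real.cosh (X i k h)) /
        (Real.sinh (X i j k) * Real.sinh (X i j h)) =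
      (Real.cosh (X j i k) * Real.cosh (X j i h) - Real.cosh (X j k h)) /
        (Real.sinh (X j i k) * Real.sinh (X j i h))) := by
  have hc1 : ∀ i j, i ≠ j → 1 < Real.cosh (l i j) := fun i j h =>
    Real.one_lt_cosh.2 (ne_of_gt (hpos i j h))
  have hs0 : ∀ i j, i ≠ j → 0 < Real.sinh (l i j) := fun i j h =>
    Real.sinh_pos_iff.2 (hpos i j h)
  have hQ : ∀ i j k, i ≠ j → i ≠ k → j ≠ k →
      0 < 2 * Real.cosh (l i j) * Real.cosh (l i k) * Real.cosh (l j k)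
        + (Real.cosh (l i j)) ^ 2 + (Real.cosh (l i k)) ^ 2 + (Real.cosh (l j k)) ^ 2 - 1 := by
    intro i j k hij hik hjk
    have ha := hc1 i j hij; have hb := hc1 i k hik; have hc := hc1 j k hjk
    nlinarith [mul_pos (mul_pos (lt_trans one_pos ha) (lt_trans one_pos hb))
      (lt_trans one_pos hc), sq_nonneg (Real.cosh (l i j)), sq_nonneg (Real.cosh (l i k))]
  have key : ∀ i j k, i ≠ j → i ≠ k → j ≠ k → 1 < coshVertexEdge l i j k := by
    intro i j k hij hik hjk
    have ha := hc1 i j hij; have hb := hc1 i k hik; have hc := hc1 j k hjk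
    have hsa := hs0 i j hij; have hsb := hs0 i k hik
    rw [coshVertexEdge, one_lt_div (by positivity)]
    have habc : (0:ℝ) < Real.cosh (l i j) * Real.cosh (l i k) + Real.cosh (l j k) := by
      nlinarith
    have h2 : (Real.sinh (l i j) * Real.sinh (l i k)) ^ 2 <
        (Real.cosh (l i j) * Real.cosh (l i k) + Real.cosh (l j k)) ^ 2 := by
      have e1 := Real.sinh_sq (l i j); have e2 := Real.sinh_sq (l i k)
      nlinarith [hQ i j k hij hik hjk]
    exact lt_of_pow_lt_pow_left₀ 2 (le_of_lt habc) h2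
  have hsinhX : ∀ i j k, i ≠ j → i ≠ k → j ≠ k →
      Real.sinh (X i j k) =
        Real.sqrt (2 * Real.cosh (l i j) * Real.cosh (l i k) * Real.cosh (l j k)
            + (Real.cosh (l i j)) ^ 2 + (Real.cosh (l i k)) ^ 2 + (Real.cosh (l j k)) ^ 2 - 1) /
          (Real.sinh (l i j) * Real.sinh (l i k)) := by
    intro i j k hij hik hjk
    obtain ⟨hX0, hXc⟩ := hX i j k hij hik hjk
    have hsa := hs0 i j hij; have hsb := hs0 i k hik
    have hq := hQ i j k hij hik hjk
    have hsX : 0 ≤ Real.sinh (X i j k) := Real.sinh_nonneg_iff.2 hX0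
    have h1 : Real.sinh (X i j k) ^ 2 =
        (2 * Real.cosh (l i j) * Real.cosh (l i k) * Real.cosh (l j k)
            + (Real.cosh (l i j)) ^ 2 + (Real.cosh (l i k)) ^ 2 + (Real.cosh (l j k)) ^ 2 - 1) /
          (Real.sinh (l i j) * Real.sinh (l i k)) ^ 2 := by
      rw [Real.sinh_sq, hXc, coshVertexEdge, div_pow, div_sub_one (by positivity)]
      congr 1
      have e1 := Real.sinh_sq (l i j); have e2 := Real.sinh_sq (l i k)
      nlinarith [e1, e2]
    have h2 := congrArg Real.sqrt h1
    rwa [Real.sqrt_sq hsX, Real.sqrt_div (le_of_lt hq),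
      Real.sqrt_sq (by positivity)] at h2
  have main : ∀ i j k h : Fin 4, i ≠ j → i ≠ k → i ≠ h → j ≠ k → j ≠ h → k ≠ h →
      (Real.cosh (X i j k) * Real.cosh (X i j h) - Real.cosh (X i k h)) /
        (Real.sinh (X i j k) * Real.sinh (X i j h)) =
      (Real.cosh (l i k) * Real.cosh (l i h) + Real.cosh (l j k) * Real.cosh (l j h)
        + Real.cosh (l i j) * Real.cosh (l i k) * Real.cosh (l j h)
        + Real.cosh (l i j) * Real.cosh (l i h) * Real.cosh (l j k)
        - (Real.sinh (l i j)) ^ 2 * Real.cosh (l k h)) /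
      (Real.sqrt (2 * Real.cosh (l i j) * Real.cosh (l i k) * Real.cosh (l j k)
            + (Real.cosh (l i j)) ^ 2 + (Real.cosh (l i k)) ^ 2 + (Real.cosh (l j k)) ^ 2 - 1) *
        Real.sqrt (2 * Real.cosh (l i j) * Real.cosh (l i h) * Real.cosh (l j h)
            + (Real.cosh (l i j)) ^ 2 + (Real.cosh (l i h)) ^ 2 + (Real.cosh (l j h)) ^ 2 - 1)) := by
    intro i j k h hij hik hih hjk hjh hkh
    have hsa := hs0 i j hij; have hsb := hs0 i k hik; have hsd := hs0 i h hih
    have hq1 : (0:ℝ) < Real.sqrt (2 * Real.cosh (l i j) * Real.cosh (l i k) * Real.cosh (l j k)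
        + (Real.cosh (l i j)) ^ 2 + (Real.cosh (l i k)) ^ 2 + (Real.cosh (l j k)) ^ 2 - 1) :=
      Real.sqrt_pos.2 (hQ i j k hij hik hjk)
    have hq2 : (0:ℝ) < Real.sqrt (2 * Real.cosh (l i j) * Real.cosh (l i h) * Real.cosh (l j h)
        + (Real.cosh (l i j)) ^ 2 + (Real.cosh (l i h)) ^ 2 + (Real.cosh (l j h)) ^ 2 - 1) :=
      Real.sqrt_pos.2 (hQ i j h hij hih hjh)
    rw [(hX i j k hij hik hjk).2, (hX i j h hij hih hjh).2, (hX i k h hik hih hkh).2,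
      hsinhX i j k hij hik hjk, hsinhX i j h hij hih hjh,
      coshVertexEdge, coshVertexEdge, coshVertexEdge,
      aux_frac _ _ _ _ _ _ _ _ _ _ _ (ne_of_gt hsa) (ne_of_gt hsb) (ne_of_gt hsd)
        (ne_of_gt hq1) (ne_of_gt hq2),
      Real.sinh_sq (l i j)]
    congr 1
    ring
  refine ⟨key, main, ?_⟩
  intro i j k h hij hik hih hjk hjh hkh
  rw [main i j k h hij hik hih hjk hjh hkh,
    main j i k h (Ne.symm hij) hjk hjh hik hih hkh, hsym j i]
  congr 2
  · ring
  · congr 1; ring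
  · congr 1; ring
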